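/- Fix a real constant α. Let F(w, w̄, v) be a smooth real-valued function of a complex variable w and real variable v on an open set U ⊆ ℂ × ℝ. Then F satisfies the equation (F cos²α + F_{vv}) F_{ww̄} − (F_{w̄} cos α − i F_{vw̄})(F_w cos α + i F_{vw}) = 4 e^{−2v sin α} on U if and only if the function G := e^{v sin α} F satisfies equation (alterform) on U. -/

import Mathlib

noncomputable section

/-- Wirtinger derivative ∂_w of a complex-valued function of (w, v) ∈ ℂ × ℝ. -/
def dw (G : ℂ → ℝ → ℂ) : ℂ → ℝ → ℂ := fun w v =>
  ((fderiv ℝ (fun z => G z v) w 1) - Complex.I * (fderiv ℝ (fun z => G z v) w Complex.I)) / 2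

/-- Wirtinger derivative ∂_{w̄} of a complex-valued function of (w, v) ∈ ℂ × ℝ. -/
def dwb (G : ℂ → ℝ → ℂ) : ℂ → ℝ → ℂ := fun w v =>
  ((fderiv ℝ (fun z => G z v) w 1) + Complex.I * (fderiv ℝ (fun z => G z v) w Complex.I)) / 2

/-- Partial derivative ∂_v of a complex-valued function of (w, v) ∈ ℂ × ℝ. -/
def dv (G : ℂ → ℝ → ℂ) : ℂ → ℝ → ℂ := fun w v => deriv (fun t => G w t) v

/-- A real-valued function of (w, v), viewed as complex-valued. -/
def cx (G : ℂ → ℝ → ℝ) : ℂ → ℝ → ℂ := fun w v => (G w v : ℂ)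

/-- Equation (alterform) at the point (w, v):
(G + G_{vv} − 2 G_v sin α) G_{ww̄}
  − (e^{iα} G_{w̄} − i G_{vw̄})(e^{−iα} G_w + i G_{vw}) = 4. -/
def Alterform (α : ℝ) (G : ℂ → ℝ → ℝ) (w : ℂ) (v : ℝ) : Prop :=
  (cx G w v + dv (dv (cx G)) w v - 2 * dv (cx G) w v * (Real.sin α : ℂ))
      * dwb (dw (cx G)) w v
    - (Complex.exp (Complex.I * (α : ℂ)) * dwb (cx G) w v
        - Complex.I * dwb (dv (cx G)) w v)
      * (Complex.exp (-(Complex.I * (α : ℂ))) * dw (cx G) w v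
        + Complex.I * dw (dv (cx G)) w v)
    = 4

/- ### Auxiliary lemmas -/

lemma deriv_ofReal_comp' (f : ℝ → ℝ) (x : ℝ) :
    deriv (fun t => ((f t : ℝ) : ℂ)) x = ((deriv f x : ℝ) : ℂ) := by
  by_cases h : DifferentiableAt ℝ f x
  · exact (h.hasDerivAt.ofReal_comp).deriv
  · have h2 : ¬ DifferentiableAt ℝ (fun t => ((f t : ℝ) : ℂ)) x := by
      intro h2
      exact h (by simpa using (show DifferentiableAt ℝ (fun t => ((f t : ℝ) : ℂ).re) x from Complex.reCLM.differentiable.differentiableAt.comp x h2))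
    rw [deriv_zero_of_not_differentiableAt h, deriv_zero_of_not_differentiableAt h2,
      Complex.ofReal_zero]

lemma fderiv_cmul (a : ℂ) (ha : a ≠ 0) (f : ℂ → ℂ) (w y : ℂ) :
    fderiv ℝ (fun z => a * f z) w y = a * fderiv ℝ f w y := by
  by_cases h : DifferentiableAt ℝ f w
  · rw [fderiv_const_mul h a]; simp [smul_eq_mul]
  · have h2 : ¬ DifferentiableAt ℝ (fun z => a * f z) w := by
      intro h2
      have h3 := h2.const_mul a⁻¹
      simp only [← mul_assoc, inv_mul_cancel₀ ha, one_mul] at h3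
      exact h h3
    rw [fderiv_zero_of_not_differentiableAt h, fderiv_zero_of_not_differentiableAt h2]
    simp

lemma dw_smul (a : ℝ → ℂ) (ha : ∀ t, a t ≠ 0) (H : ℂ → ℝ → ℂ) (w : ℂ) (v : ℝ) :
    dw (fun z t => a t * H z t) w v = a v * dw H w v := by
  simp only [dw, fderiv_cmul (a v) (ha v) (fun z => H z v)]
  ring

lemma dwb_smul (a : ℝ → ℂ) (ha : ∀ t, a t ≠ 0) (H : ℂ → ℝ → ℂ) (w : ℂ) (v : ℝ) :
    dwb (fun z t => a t * H z t) w v = a v * dwb H w v := by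
  simp only [dwb, fderiv_cmul (a v) (ha v) (fun z => H z v)]
  ring

lemma dv_cx_eq (F : ℂ → ℝ → ℝ) :
    dv (cx F) = cx (fun z t => deriv (fun t' => F z t') t) := by
  funext z t
  exact deriv_ofReal_comp' (fun t' => F z t') t

/-- The pointwise key identity: the alterform LHS for `G = e^{v sin α} F` equals
`e^{2 v sin α}` times the euclidean LHS for `F`. -/
lemma key_identity (α : ℝ) (U : Set (ℂ × ℝ)) (hU : IsOpen U)
    (F : ℂ → ℝ → ℝ)
    (hF : ContDiffOn ℝ (⊤ : ℕ∞) (fun p : ℂ × ℝ => F p.1 p.2) U)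
    (w : ℂ) (v : ℝ) (hwv : (w, v) ∈ U) :
    (cx (fun z t => Real.exp (t * Real.sin α) * F z t) w v
        + dv (dv (cx (fun z t => Real.exp (t * Real.sin α) * F z t))) w v
        - 2 * dv (cx (fun z t => Real.exp (t * Real.sin α) * F z t)) w v * (Real.sin α : ℂ))
      * dwb (dw (cx (fun z t => Real.exp (t * Real.sin α) * F z t))) w v
    - (Complex.exp (Complex.I * (α : ℂ))
          * dwb (cx (fun z t => Real.exp (t * Real.sin α) * F z t)) w v
        - Complex.I * dwb (dv (cx (fun z t => Real.exp (t * Real.sin α) * F z t))) w v)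
      * (Complex.exp (-(Complex.I * (α : ℂ)))
          * dw (cx (fun z t => Real.exp (t * Real.sin α) * F z t)) w v
        + Complex.I * dw (dv (cx (fun z t => Real.exp (t * Real.sin α) * F z t))) w v)
    = ((Real.exp (v * Real.sin α) : ℂ)) ^ 2 *
      ((cx F w v * (Real.cos α : ℂ) ^ 2 + dv (dv (cx F)) w v) * dwb (dw (cx F)) w v
        - (dwb (cx F) w v * (Real.cos α : ℂ) - Complex.I * dwb (dv (cx F)) w v)
          * (dw (cx F) w v * (Real.cos α : ℂ) + Complex.I * dw (dv (cx F)) w v)) := by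
  set s : ℝ := Real.sin α with hs
  set c : ℝ := Real.cos α with hcdef
  set G : ℂ → ℝ → ℝ := fun z t => Real.exp (t * s) * F z t with hG
  set Ec : ℝ → ℂ := fun t => ((Real.exp (t * s) : ℝ) : ℂ) with hEcdef
  have hEc : ∀ t, Ec t ≠ 0 := fun t => by
    simp only [hEcdef, Complex.ofReal_ne_zero]; exact Real.exp_ne_zero _
  set P : ℂ × ℝ → ℝ := fun p => F p.1 p.2 with hP
  set Q : ℂ × ℝ → ℝ := fun p => fderiv ℝ P p (0, 1) with hQdef
  set Fv : ℂ → ℝ → ℝ := fun z t => deriv (fun t' => F z t') t with hFvdef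
  -- differentiability of P on U
  have hPd : ∀ p ∈ U, DifferentiableAt ℝ P p := fun p hp =>
    (hF.contDiffAt (hU.mem_nhds hp)).differentiableAt (by simp)
  -- slice derivative in v
  have hSlice : ∀ z t, (z, t) ∈ U → HasDerivAt (fun t' => F z t') (Q (z, t)) t := by
    intro z t hzt
    have hm : HasDerivAt (fun t' : ℝ => ((z : ℂ), t')) ((0 : ℂ), (1 : ℝ)) t :=
      HasDerivAt.prodMk (hasDerivAt_const t z) (hasDerivAt_id t)
    exact (hPd (z, t) hzt).hasFDerivAt.comp_hasDerivAt t hm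
  have hFvQ : ∀ z t, (z, t) ∈ U → Fv z t = Q (z, t) := fun z t hzt =>
    (hSlice z t hzt).deriv
  -- Q is smooth on U
  have hQ : ContDiffOn ℝ (⊤ : ℕ∞) Q U := by
    have h1 : ContDiffOn ℝ (⊤ : ℕ∞) (fderiv ℝ P) U :=
      hF.fderiv_of_isOpen hU (by exact_mod_cast le_top)
    exact h1.clm_apply contDiffOn_const
  have hQd : DifferentiableAt ℝ Q (w, v) :=
    (hQ.contDiffAt (hU.mem_nhds hwv)).differentiableAt (by simp)
  -- neighborhood filters
  have hVt : {t' : ℝ | (w, t') ∈ U} ∈ nhds v := by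
    have hc : Continuous (fun t' : ℝ => ((w : ℂ), t')) := by continuity
    exact hc.continuousAt.preimage_mem_nhds (hU.mem_nhds hwv)
  have hVw : {z : ℂ | (z, v) ∈ U} ∈ nhds w := by
    have hc : Continuous (fun z : ℂ => (z, v)) := by continuity
    exact hc.continuousAt.preimage_mem_nhds (hU.mem_nhds hwv)
  -- basic w-derivative scalings
  have hcxG : cx G = fun z t => Ec t * cx F z t := by
    funext z t
    simp only [cx, hG, hEcdef, Complex.ofReal_mul]
  have hdwG : dw (cx G) = fun z t => Ec t * dw (cx F) z t := by
    funext z t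
    rw [hcxG]
    exact dw_smul Ec hEc (cx F) z t
  have hdwbG : dwb (cx G) = fun z t => Ec t * dwb (cx F) z t := by
    funext z t
    rw [hcxG]
    exact dwb_smul Ec hEc (cx F) z t
  have hdwdwbG : dwb (dw (cx G)) w v = Ec v * dwb (dw (cx F)) w v := by
    rw [hdwG]
    exact dwb_smul Ec hEc (dw (cx F)) w v
  -- first v-derivative on U
  have hdvG : ∀ z t, (z, t) ∈ U →
      dv (cx G) z t = Ec t * ((s : ℂ) * cx F z t + cx Fv z t) := by
    intro z t hzt
    have hE : HasDerivAt (fun t' : ℝ => Real.exp (t' * s)) (Real.exp (t * s) * s) t := by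
      simpa using ((hasDerivAt_id t).mul_const s).exp
    have hprod := hE.mul (hSlice z t hzt)
    have h1 : dv (cx G) z t = ((deriv (fun t' => G z t') t : ℝ) : ℂ) :=
      deriv_ofReal_comp' (fun t' => G z t') t
    rw [h1]
    have h2 : deriv (fun t' => G z t') t
        = Real.exp (t * s) * s * F z t + Real.exp (t * s) * Q (z, t) := hprod.deriv
    rw [h2, ← hFvQ z t hzt]
    simp only [cx, hEcdef]
    push_cast
    ring
  -- second v-derivative at (w,v)
  have hdvF2 : dv (dv (cx F)) w v = ((deriv (fun t => Fv w t) v : ℝ) : ℂ) := by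
    rw [dv_cx_eq F]
    exact deriv_ofReal_comp' (fun t => Fv w t) v
  have hFv' : HasDerivAt (fun t => Fv w t) (deriv (fun t => Fv w t) v) v := by
    have heq2 : (fun t => Fv w t) =ᶠ[nhds v] (fun t => Q (w, t)) := by
      filter_upwards [hVt] with t ht
      exact hFvQ w t ht
    have hQs : DifferentiableAt ℝ (fun t => Q (w, t)) v :=
      hQd.comp v (DifferentiableAt.prodMk (differentiableAt_const w) differentiableAt_id)
    exact (heq2.differentiableAt_iff.mpr hQs).hasDerivAt
  have hdvdvG : dv (dv (cx G)) w v
      = Ec v * ((s : ℂ) ^ 2 * cx F w v + 2 * (s : ℂ) * cx Fv w v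
          + ((deriv (fun t => Fv w t) v : ℝ) : ℂ)) := by
    have heq : (fun t => dv (cx G) w t)
        =ᶠ[nhds v] (fun t => ((Real.exp (t * s) * (s * F w t + Fv w t) : ℝ) : ℂ)) := by
      filter_upwards [hVt] with t ht
      rw [hdvG w t ht]
      simp only [cx, hEcdef]
      push_cast
      ring
    have h0 : dv (dv (cx G)) w v = deriv (fun t => dv (cx G) w t) v := rfl
    rw [h0, heq.deriv_eq, deriv_ofReal_comp']
    have hE : HasDerivAt (fun t' : ℝ => Real.exp (t' * s)) (Real.exp (v * s) * s) v := by
      simpa using ((hasDerivAt_id v).mul_const s).exp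
    have hin : HasDerivAt (fun t => s * F w t + Fv w t)
        (s * Q (w, v) + deriv (fun t => Fv w t) v) v :=
      ((hSlice w v hwv).const_mul s).add hFv'
    have hprod : HasDerivAt (fun t => Real.exp (t * s) * (s * F w t + Fv w t)) _ v := hE.mul hin
    rw [hprod.deriv, ← hFvQ w v hwv]
    simp only [cx, hEcdef]
    push_cast
    ring
  -- differentiability of slices in w
  have hd1 : DifferentiableAt ℝ (fun z => cx F z v) w := by
    have hFd : DifferentiableAt ℝ (fun z : ℂ => F z v) w :=
      by have := (hPd (w, v) hwv).comp w (show DifferentiableAt ℝ (fun z : ℂ => (z, v)) w from DifferentiableAt.prodMk differentiableAt_id (differentiableAt_const v)); exact this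
    exact Complex.ofRealCLM.differentiable.differentiableAt.comp w hFd
  have hd2 : DifferentiableAt ℝ (fun z => cx Fv z v) w := by
    have heq2 : (fun z => cx Fv z v) =ᶠ[nhds w] (fun z => ((Q (z, v) : ℝ) : ℂ)) := by
      filter_upwards [hVw] with z hz
      simp only [cx, hFvQ z v hz]
    have hQs : DifferentiableAt ℝ (fun z : ℂ => Q (z, v)) w :=
      by have := hQd.comp w (show DifferentiableAt ℝ (fun z : ℂ => (z, v)) w from DifferentiableAt.prodMk differentiableAt_id (differentiableAt_const v)); exact this
    exact heq2.differentiableAt_iff.mpr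
      (Complex.ofRealCLM.differentiable.differentiableAt.comp w hQs)
  -- mixed derivatives
  have hmix : ∀ y : ℂ, fderiv ℝ (fun z => dv (cx G) z v) w y
      = Ec v * ((s : ℂ) * fderiv ℝ (fun z => cx F z v) w y
          + fderiv ℝ (fun z => cx Fv z v) w y) := by
    intro y
    have heqw : (fun z => dv (cx G) z v)
        =ᶠ[nhds w] (fun z => Ec v * ((s : ℂ) * cx F z v + cx Fv z v)) := by
      filter_upwards [hVw] with z hz
      exact hdvG z v hz
    rw [heqw.fderiv_eq]
    rw [fderiv_cmul (Ec v) (hEc v) (fun z => (s : ℂ) * cx F z v + cx Fv z v) w y]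
    congr 1
    rw [fderiv_fun_add (hd1.const_mul _) hd2, fderiv_const_mul hd1]
    simp [smul_eq_mul]
  have hdwdvG : dw (dv (cx G)) w v
      = Ec v * ((s : ℂ) * dw (cx F) w v + dw (dv (cx F)) w v) := by
    rw [dv_cx_eq F]
    simp only [dw, hmix]
    ring
  have hdwbdvG : dwb (dv (cx G)) w v
      = Ec v * ((s : ℂ) * dwb (cx F) w v + dwb (dv (cx F)) w v) := by
    rw [dv_cx_eq F]
    simp only [dwb, hmix]
    ring
  -- first v-derivative at (w,v), euclid side rewrite
  have hdvF1 : dv (cx F) w v = cx Fv w v := by rw [dv_cx_eq F]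
  have hdvG1 : dv (cx G) w v = Ec v * ((s : ℂ) * cx F w v + cx Fv w v) := hdvG w v hwv
  have hcxG1 : cx G w v = Ec v * cx F w v := by rw [hcxG]
  have hdwG1 : dw (cx G) w v = Ec v * dw (cx F) w v := by rw [hdwG]
  have hdwbG1 : dwb (cx G) w v = Ec v * dwb (cx F) w v := by rw [hdwbG]
  -- trigonometric facts
  have heI : Complex.exp (Complex.I * (α : ℂ)) = (c : ℂ) + (s : ℂ) * Complex.I := by
    rw [mul_comm, Complex.exp_mul_I, hcdef, hs, Complex.ofReal_cos, Complex.ofReal_sin]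
  have heI' : Complex.exp (-(Complex.I * (α : ℂ))) = (c : ℂ) - (s : ℂ) * Complex.I := by
    have h1 : -(Complex.I * (α : ℂ)) = ((-α : ℝ) : ℂ) * Complex.I := by push_cast; ring
    rw [h1, Complex.exp_mul_I, hcdef, hs, Complex.ofReal_cos, Complex.ofReal_sin]
    push_cast
    rw [Complex.cos_neg, Complex.sin_neg]
    ring
  have hc2 : (c : ℂ) ^ 2 = 1 - (s : ℂ) ^ 2 := by
    rw [hcdef, hs]
    norm_cast
    exact Real.cos_sq' α
  -- assemble
  rw [hdvdvG, hdwdvG, hdwbdvG, hdwdwbG, hdvG1, hcxG1, hdwG1, hdwbG1]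
  rw [hdvF2]
  rw [heI, heI']
  rw [show ((Real.exp (v * s) : ℝ) : ℂ) = Ec v from rfl]
  linear_combination (-(Ec v ^ 2 * cx F w v * dwb (dw (cx F)) w v)) * hc2

/-- F satisfies
(F cos²α + F_{vv}) F_{ww̄} − (F_{w̄} cos α − i F_{vw̄})(F_w cos α + i F_{vw}) = 4 e^{−2v sin α}
on U iff G := e^{v sin α} F satisfies equation (alterform) on U. -/
theorem euclid_iff_alterform (α : ℝ) (U : Set (ℂ × ℝ)) (hU : IsOpen U)
    (F : ℂ → ℝ → ℝ)
    (hF : ContDiffOn ℝ (⊤ : ℕ∞) (fun p : ℂ × ℝ => F p.1 p.2) U) :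
    (∀ w : ℂ, ∀ v : ℝ, (w, v) ∈ U →
        (cx F w v * (Real.cos α : ℂ) ^ 2 + dv (dv (cx F)) w v) * dwb (dw (cx F)) w v
          - (dwb (cx F) w v * (Real.cos α : ℂ) - Complex.I * dwb (dv (cx F)) w v)
            * (dw (cx F) w v * (Real.cos α : ℂ) + Complex.I * dw (dv (cx F)) w v)
          = ((4 * Real.exp (-2 * v * Real.sin α) : ℝ) : ℂ))
    ↔ (∀ w : ℂ, ∀ v : ℝ, (w, v) ∈ U →
        Alterform α (fun z t => Real.exp (t * Real.sin α) * F z t) w v) := by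
  have hE4 : ∀ v : ℝ, ((Real.exp (v * Real.sin α) : ℂ)) ^ 2
      * ((4 * Real.exp (-2 * v * Real.sin α) : ℝ) : ℂ) = 4 := by
    intro v
    have h0 : Real.exp (v * Real.sin α) ^ 2 * (4 * Real.exp (-2 * v * Real.sin α)) = 4 := by
      rw [sq, ← Real.exp_add]
      rw [show Real.exp (v * Real.sin α + v * Real.sin α) * (4 * Real.exp (-2 * v * Real.sin α))
        = 4 * (Real.exp (v * Real.sin α + v * Real.sin α) * Real.exp (-2 * v * Real.sin α)) from by ring]
      rw [← Real.exp_add, show v * Real.sin α + v * Real.sin α + -2 * v * Real.sin α = 0 from by ring,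
        Real.exp_zero]
      norm_num
    calc ((Real.exp (v * Real.sin α) : ℂ)) ^ 2 * ((4 * Real.exp (-2 * v * Real.sin α) : ℝ) : ℂ)
        = ((Real.exp (v * Real.sin α) ^ 2 * (4 * Real.exp (-2 * v * Real.sin α)) : ℝ) : ℂ) := by
          push_cast; ring
      _ = 4 := by rw [h0]; norm_num
  constructor
  · intro h w v hwv
    unfold Alterform
    rw [key_identity α U hU F hF w v hwv, h w v hwv, hE4 v]
  · intro h w v hwv
    have ha := h w v hwv
    unfold Alterform at ha
    rw [key_identity α U hU F hF w v hwv] at ha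
    have hne : ((Real.exp (v * Real.sin α) : ℂ)) ^ 2 ≠ 0 := by
      apply pow_ne_zero
      simp [Real.exp_ne_zero]
    apply mul_left_cancel₀ hne
    rw [ha, hE4 v]

end
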